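/- Let T > 0, r ≥ 1, α ∈ (0,1), β ∈ (0,1/2), and set ρ := min{1−α, 1/2−β}. Then there exists a constant C > 0, independent of N and n, such that for every integer N ≥ 1 and every n ∈ {1,…,N}, ∫_0^{t₁} (t_n − s)^{−α}·s^{ρ} ds ≤ C·t_n^{1−α+ρ−(1/2−β)/r}·N^{−(1/2−β)}. -/

import Mathlib

/-- The graded mesh point `t_n = T * (n/N)^r`. -/
noncomputable def gmesh (T r : ℝ) (N n : ℕ) : ℝ := T * ((n : ℝ) / (N : ℝ)) ^ r

set_option maxHeartbeats 1000000 in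
/-- Bound for the initial-interval integral in the EM error analysis (equation `eq.rho`). -/
theorem stmt11 (T r α β : ℝ) (hT : 0 < T) (hr : 1 ≤ r)
    (hα : α ∈ Set.Ioo (0:ℝ) 1) (hβ : β ∈ Set.Ioo (0:ℝ) (1/2))
    (ρ : ℝ) (hρ : ρ = min (1 - α) (1/2 - β)) :
    ∃ C > (0:ℝ), ∀ N : ℕ, 1 ≤ N → ∀ n : ℕ, 1 ≤ n → n ≤ N →
      (∫ s in (0:ℝ)..(gmesh T r N 1), (gmesh T r N n - s) ^ (-α) * s ^ ρ)
        ≤ C * (gmesh T r N n) ^ (1 - α + ρ - (1/2 - β) / r) * (N : ℝ) ^ (-(1/2 - β)) := by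
  obtain ⟨hα0, hα1⟩ := hα
  obtain ⟨hβ0, hβ1⟩ := hβ
  have hr0 : (0:ℝ) < r := lt_of_lt_of_le one_pos hr
  set c : ℝ := 1/2 - β with hcdef
  have hc0 : 0 < c := by rw [hcdef]; linarith
  have hρ0 : 0 < ρ := by rw [hρ]; apply lt_min <;> linarith
  have hρle : ρ ≤ c := by rw [hρ, hcdef]; exact min_le_right _ _
  have hcr : c / r ≤ c := by
    rw [div_le_iff₀ hr0]; nlinarith
  refine ⟨T ^ (c/r) * (1/(1-α) + 2 ^ α / (ρ+1)), ?_, ?_⟩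
  · apply mul_pos (Real.rpow_pos_of_pos hT _)
    have : (0:ℝ) < 2 ^ α := Real.rpow_pos_of_pos (by norm_num) _
    have h1 : (0:ℝ) < 1/(1-α) := div_pos one_pos (by linarith)
    have h2 : (0:ℝ) < 2^α/(ρ+1) := by positivity
    linarith
  intro N hN n hn hnN
  have hN0 : (0:ℝ) < (N:ℝ) := by exact_mod_cast hN
  have hn0 : (0:ℝ) < (n:ℝ) := by exact_mod_cast hn
  set t1 := gmesh T r N 1 with ht1def
  set tn := gmesh T r N n with htndef
  have ht1pos : 0 < t1 := by
    rw [ht1def]; unfold gmesh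
    have : (0:ℝ) < ((1:ℕ):ℝ) / (N:ℝ) := by positivity
    exact mul_pos hT (Real.rpow_pos_of_pos this r)
  have htnpos : 0 < tn := by
    rw [htndef]; unfold gmesh
    have : (0:ℝ) < (n:ℝ) / (N:ℝ) := by positivity
    exact mul_pos hT (Real.rpow_pos_of_pos this r)
  have ht1n : t1 ≤ tn := by
    rw [ht1def, htndef]; unfold gmesh
    apply mul_le_mul_of_nonneg_left _ hT.le
    apply Real.rpow_le_rpow (by positivity) _ hr0.le
    gcongr
  -- key identity : t1 ^ (c/r) = T^(c/r) * N^(-c)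
  have ht1c : t1 ^ (c/r) = T ^ (c/r) * (N:ℝ) ^ (-c) := by
    rw [ht1def]; unfold gmesh
    rw [Nat.cast_one, Real.mul_rpow hT.le (Real.rpow_nonneg (by positivity) _),
      ← Real.rpow_mul (by positivity : (0:ℝ) ≤ 1/(N:ℝ)),
      mul_div_cancel₀ _ (ne_of_gt hr0), one_div, Real.inv_rpow hN0.le, ← Real.rpow_neg hN0.le]
  have hNc : (0:ℝ) < (N:ℝ) ^ (-c) := Real.rpow_pos_of_pos hN0 _
  rcases eq_or_lt_of_le hn with h1 | h2
  · -- case n = 1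
    have hn1 : n = 1 := h1.symm
    subst hn1
    have htt : tn = t1 := by rw [htndef, ht1def]
    have hint1 : IntervalIntegrable (fun s => (t1 - s) ^ (-α)) MeasureTheory.volume 0 t1 := by
      have h := intervalIntegral.intervalIntegrable_rpow' (a := 0) (b := t1)
        (by linarith : (-1:ℝ) < -α)
      have h2 := h.comp_sub_left t1
      simpa using h2.symm
    have hcont : Continuous fun s : ℝ => s ^ ρ :=
      continuous_id.rpow_const (fun x => Or.inr hρ0.le)
    have step1 : (∫ s in (0:ℝ)..t1, (t1 - s) ^ (-α) * s ^ ρ)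
        ≤ ∫ s in (0:ℝ)..t1, (t1 - s) ^ (-α) * t1 ^ ρ := by
      apply intervalIntegral.integral_mono_on ht1pos.le
        (hint1.mul_continuousOn hcont.continuousOn) (hint1.mul_const _)
      intro x hx
      exact mul_le_mul_of_nonneg_left (Real.rpow_le_rpow hx.1 hx.2 hρ0.le)
        (Real.rpow_nonneg (by linarith [hx.2] : (0:ℝ) ≤ t1 - x) _)
    have step2 : (∫ s in (0:ℝ)..t1, (t1 - s) ^ (-α) * t1 ^ ρ)
        = t1 ^ (1-α) / (1-α) * t1 ^ ρ := by
      rw [intervalIntegral.integral_mul_const]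
      congr 1
      rw [intervalIntegral.integral_comp_sub_left (fun x => x ^ (-α)) t1]
      simp only [sub_self, sub_zero]
      rw [integral_rpow (Or.inl (by linarith : (-1:ℝ) < -α))]
      rw [Real.zero_rpow (by intro h; nlinarith : -α + 1 ≠ 0)]
      rw [show -α + 1 = 1 - α by ring, sub_zero]
    have e1 : t1 ^ (1-α+ρ) = t1 ^ (1-α+ρ-c/r) * (T^(c/r) * (N:ℝ)^(-c)) := by
      rw [← ht1c, ← Real.rpow_add ht1pos]
      congr 1; ring
    have e0 : t1 ^ (1-α) * t1 ^ ρ = t1 ^ (1-α+ρ) := (Real.rpow_add ht1pos _ _).symm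
    have hA : (0:ℝ) < T ^ (c/r) := Real.rpow_pos_of_pos hT _
    have hB : (0:ℝ) < t1 ^ (1-α+ρ-c/r) := Real.rpow_pos_of_pos ht1pos _
    have h2a : (0:ℝ) < 2 ^ α / (ρ+1) := by
      have : (0:ℝ) < (2:ℝ) ^ α := Real.rpow_pos_of_pos (by norm_num) _
      positivity
    calc (∫ s in (0:ℝ)..t1, (tn - s) ^ (-α) * s ^ ρ)
        ≤ t1 ^ (1-α) / (1-α) * t1 ^ ρ := by rw [htt]; exact step1.trans step2.le
      _ = 1/(1-α) * (t1 ^ (1-α+ρ-c/r) * (T^(c/r) * (N:ℝ)^(-c))) := by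
          rw [← e1, ← e0]; ring
      _ ≤ T ^ (c/r) * (1/(1-α) + 2 ^ α / (ρ+1)) * tn ^ (1-α+ρ-c/r) * (N:ℝ)^(-c) := by
          rw [htt]
          nlinarith [mul_pos (mul_pos h2a hA) (mul_pos hB hNc)]
  · -- case 2 ≤ n
    have h2n : (2:ℝ) ≤ (n:ℝ) := by exact_mod_cast h2
    have hn2r : (2:ℝ) ≤ (n:ℝ) ^ r := by
      calc (2:ℝ) = 2 ^ (1:ℝ) := (Real.rpow_one 2).symm
        _ ≤ 2 ^ r := Real.rpow_le_rpow_of_exponent_le one_le_two hr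
        _ ≤ (n:ℝ) ^ r := Real.rpow_le_rpow (by norm_num) h2n hr0.le
    have htn_eq : tn = (n:ℝ) ^ r * t1 := by
      rw [htndef, ht1def]; unfold gmesh; rw [Nat.cast_one]
      rw [div_eq_mul_one_div, Real.mul_rpow hn0.le (by positivity)]
      ring
    have h2t1 : 2 * t1 ≤ tn := by
      rw [htn_eq]; nlinarith
    have htnt1 : tn / 2 ≤ tn - t1 := by linarith
    have htn2pos : (0:ℝ) < tn - t1 := by linarith
    have hcont : Continuous fun s : ℝ => s ^ ρ :=
      continuous_id.rpow_const (fun x => Or.inr hρ0.le)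
    have hcf : ContinuousOn (fun s : ℝ => (tn - s) ^ (-α) * s ^ ρ) (Set.uIcc 0 t1) := by
      apply ContinuousOn.mul _ hcont.continuousOn
      apply ContinuousOn.rpow_const (continuous_const.sub continuous_id).continuousOn
      intro x hx
      left
      rw [Set.uIcc_of_le ht1pos.le] at hx
      have hx2 := hx.2
      intro h; have h' : tn - x = 0 := h; linarith
    have step1 : (∫ s in (0:ℝ)..t1, (tn - s) ^ (-α) * s ^ ρ)
        ≤ ∫ s in (0:ℝ)..t1, (tn - t1) ^ (-α) * s ^ ρ := by
      apply intervalIntegral.integral_mono_on ht1pos.le hcf.intervalIntegrable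
        ((continuous_const.mul hcont).intervalIntegrable _ _)
      intro x hx
      apply mul_le_mul_of_nonneg_right _ (Real.rpow_nonneg hx.1 _)
      exact Real.rpow_le_rpow_of_nonpos htn2pos (by linarith [hx.2]) (by linarith)
    have step2 : (∫ s in (0:ℝ)..t1, (tn - t1) ^ (-α) * s ^ ρ)
        = (tn - t1) ^ (-α) * (t1 ^ (ρ+1) / (ρ+1)) := by
      rw [intervalIntegral.integral_const_mul]
      congr 1
      rw [integral_rpow (Or.inl (by linarith : (-1:ℝ) < ρ))]
      rw [Real.zero_rpow (by positivity : ρ + 1 ≠ 0), sub_zero]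
    have hb1 : (tn - t1) ^ (-α) ≤ (tn/2) ^ (-α) :=
      Real.rpow_le_rpow_of_nonpos (by linarith) htnt1 (by linarith)
    have hb2 : (tn/2) ^ (-α) = tn ^ (-α) * 2 ^ α := by
      rw [Real.div_rpow htnpos.le (by norm_num : (0:ℝ) ≤ 2),
        Real.rpow_neg (by norm_num : (0:ℝ) ≤ 2), div_eq_mul_inv, inv_inv]
    have epos : (0:ℝ) < 1 + ρ - c/r := by
      have hclt : c < 1 := by rw [hcdef]; linarith
      linarith
    have e1 : t1 ^ (ρ+1) = t1 ^ (1+ρ-c/r) * (T^(c/r) * (N:ℝ)^(-c)) := by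
      rw [← ht1c, ← Real.rpow_add ht1pos]
      congr 1; ring
    have e2 : t1 ^ (1+ρ-c/r) ≤ tn ^ (1+ρ-c/r) :=
      Real.rpow_le_rpow ht1pos.le ht1n epos.le
    have hA : (0:ℝ) < T ^ (c/r) := Real.rpow_pos_of_pos hT _
    have hP : (0:ℝ) < tn ^ (1-α+ρ-c/r) := Real.rpow_pos_of_pos htnpos _
    have hQ : (0:ℝ) < tn ^ (-α) := Real.rpow_pos_of_pos htnpos _
    have h2α : (0:ℝ) < (2:ℝ) ^ α := Real.rpow_pos_of_pos (by norm_num) _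
    have etn : tn ^ (-α) * tn ^ (1+ρ-c/r) = tn ^ (1-α+ρ-c/r) := by
      rw [← Real.rpow_add htnpos]; congr 1; ring
    calc (∫ s in (0:ℝ)..t1, (tn - s) ^ (-α) * s ^ ρ)
        ≤ (tn - t1) ^ (-α) * (t1 ^ (ρ+1) / (ρ+1)) := step1.trans step2.le
      _ ≤ (tn ^ (-α) * 2 ^ α) * (tn ^ (1+ρ-c/r) * (T^(c/r) * (N:ℝ)^(-c)) / (ρ+1)) := by
          rw [← hb2]
          apply mul_le_mul hb1 _ (by positivity) (Real.rpow_nonneg (by positivity) _)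
          have hnum : t1 ^ (ρ+1) ≤ tn ^ (1+ρ-c/r) * (T^(c/r) * (N:ℝ)^(-c)) := by
            rw [e1]; exact mul_le_mul_of_nonneg_right e2 (by positivity)
          exact (div_le_div_iff_of_pos_right (by linarith : (0:ℝ) < ρ + 1)).mpr hnum
      _ = 2 ^ α / (ρ+1) * T^(c/r) * tn ^ (1-α+ρ-c/r) * (N:ℝ)^(-c) := by
          rw [← etn]; ring
      _ ≤ T ^ (c/r) * (1/(1-α) + 2 ^ α / (ρ+1)) * tn ^ (1-α+ρ-c/r) * (N:ℝ)^(-c) := by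
          have hres : (0:ℝ) < 1/(1-α) := div_pos one_pos (by linarith)
          nlinarith [mul_pos (mul_pos hres hA) (mul_pos hP hNc)]
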